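/- Let f(x) = x^ρ ℓ(x) p(x) where ℓ is slowly varying at infinity, ρ ∈ ℝ, r > 1, and p is a positive, bounded, right-continuous function, bounded away from zero on [1,r], with p(xr) = p(x) for all x > 0. Then f^*(λ) := limsup_{x→∞} f(λx)/f(x) equals λ^ρ · sup_{x∈[1,r]} p(λx)/p(x) for every λ > 0. -/

import Mathlib

open Filter Set Real

/-- `p ∈ P_r`: positive, bounded, right-continuous, bounded away from `0` on `[1,r]`,
and logarithmically periodic with period `r`. -/
def MemP (r : ℝ) (p : ℝ → ℝ) : Prop :=
  (∀ x > (0:ℝ), 0 < p x) ∧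
  (∃ M : ℝ, ∀ x > (0:ℝ), p x ≤ M) ∧
  (∀ x > (0:ℝ), ContinuousWithinAt p (Set.Ici x) x) ∧
  (∃ c > (0:ℝ), ∀ x ∈ Set.Icc (1:ℝ) r, c ≤ p x) ∧
  (∀ x > (0:ℝ), p (x * r) = p x)

/-- `ℓ` is slowly varying at infinity (and eventually positive). -/
def SlowlyVarying (l : ℝ → ℝ) : Prop :=
  (∀ᶠ x in Filter.atTop, 0 < l x) ∧
  ∀ lam > (0:ℝ),
    Filter.Tendsto (fun x : ℝ => l (lam * x) / l x) Filter.atTop (nhds 1)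

/-- `f ∈ RL(p, r, ρ)` with slowly varying part `ℓ`:
`f(x rⁿ)/((x rⁿ)^ρ ℓ(x rⁿ)) → p(x)` at every continuity point `x > 0` of `p`. -/
def MemRL (f : ℝ → ℝ) (p : ℝ → ℝ) (r ρ : ℝ) (l : ℝ → ℝ) : Prop :=
  ∀ x > (0:ℝ), ContinuousAt p x →
    Filter.Tendsto (fun n : ℕ => f (x * r^n) / ((x * r^n) ^ ρ * l (x * r^n)))
      Filter.atTop (nhds (p x))

/-- `f` is ultimately monotone: monotone (in either direction) on some `[x₀, ∞)`. -/
def UltimatelyMonotone (f : ℝ → ℝ) : Prop :=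
  ∃ x₀ : ℝ, MonotoneOn f (Set.Ici x₀) ∨ AntitoneOn f (Set.Ici x₀)

theorem statement_3 (f p : ℝ → ℝ) (r ρ : ℝ) (l : ℝ → ℝ)
    (hr : 1 < r) (hl : SlowlyVarying l) (hp : MemP r p)
    (hf : ∀ x > (0:ℝ), f x = x ^ ρ * l x * p x) :
    ∀ lam > (0:ℝ),
      Filter.limsup (fun x : ℝ => f (lam * x) / f x) Filter.atTop =
        lam ^ ρ * sSup ((fun x : ℝ => p (lam * x) / p x) '' Set.Icc 1 r) := by
  obtain ⟨hpos, ⟨M, hM⟩, _hrc, ⟨c, hc0, hc⟩, hper⟩ := hp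
  obtain ⟨hlpos, hlsv⟩ := hl
  intro lam hlam
  have hr0 : (0:ℝ) < r := lt_trans one_pos hr
  set g : ℝ → ℝ := fun x => p (lam * x) / p x with hg
  -- extended periodicity
  have hpern : ∀ x > (0:ℝ), ∀ n : ℕ, p (x * r ^ n) = p x := by
    intro x hx n
    induction n with
    | zero => simp
    | succ n ih =>
      have hxr : 0 < x * r ^ n := mul_pos hx (pow_pos hr0 n)
      have : p (x * r ^ (n + 1)) = p ((x * r ^ n) * r) := by ring_nf
      rw [this, hper _ hxr, ih]
  -- representation
  have hrep : ∀ x : ℝ, 1 ≤ x → ∃ y ∈ Icc (1:ℝ) r, ∃ n : ℕ, x = y * r ^ n := by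
    intro x hx
    have hx0 : (0:ℝ) < x := lt_of_lt_of_le one_pos hx
    have ht : 0 ≤ Real.logb r x := Real.logb_nonneg hr hx
    set n : ℕ := ⌊Real.logb r x⌋₊ with hn
    have h1 : (n:ℝ) ≤ Real.logb r x := Nat.floor_le ht
    have h2 : Real.logb r x < (n:ℝ) + 1 := Nat.lt_floor_add_one _
    have hxlog : r ^ Real.logb r x = x := Real.rpow_logb hr0 (ne_of_gt hr) hx0
    have key1 : r ^ n ≤ x := by
      calc (r:ℝ) ^ n = r ^ ((n:ℝ)) := (Real.rpow_natCast r n).symm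
        _ ≤ r ^ Real.logb r x := Real.rpow_le_rpow_of_exponent_le hr.le h1
        _ = x := hxlog
    have key2 : x < r ^ n * r := by
      calc x = r ^ Real.logb r x := hxlog.symm
        _ < r ^ ((n:ℝ) + 1) := Real.rpow_lt_rpow_of_exponent_lt hr h2
        _ = r ^ n * r := by
            rw [show ((n:ℝ)+1) = ((n+1 : ℕ):ℝ) by push_cast; ring, Real.rpow_natCast]
            ring
    have hrn : (0:ℝ) < r ^ n := pow_pos hr0 n
    refine ⟨x / r ^ n, ⟨(one_le_div hrn).mpr key1, ?_⟩, n, (div_mul_cancel₀ x (ne_of_gt hrn)).symm⟩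
    exact le_of_lt ((div_lt_iff₀ hrn).mpr (by linarith [key2]))
  -- lower bound for p on [1, ∞)
  have hpc : ∀ x : ℝ, 1 ≤ x → c ≤ p x := by
    intro x hx
    obtain ⟨y, hy, n, rfl⟩ := hrep x hx
    have hy0 : (0:ℝ) < y := lt_of_lt_of_le one_pos hy.1
    rw [hpern y hy0 n]
    exact hc y hy
  have hM0 : (0:ℝ) < M := lt_of_lt_of_le (hpos 1 one_pos) (hM 1 one_pos)
  -- periodicity of g
  have hgper : ∀ y > (0:ℝ), ∀ n : ℕ, g (y * r ^ n) = g y := by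
    intro y hy n
    have h1 : p (lam * (y * r ^ n)) = p (lam * y) := by
      rw [show lam * (y * r ^ n) = (lam * y) * r ^ n by ring, hpern _ (mul_pos hlam hy)]
    simp only [hg, h1, hpern y hy n]
  set T : Set ℝ := (fun x : ℝ => p (lam * x) / p x) '' Set.Icc 1 r with hT
  have hTne : T.Nonempty := ⟨g 1, 1, ⟨le_refl _, hr.le⟩, rfl⟩
  have hTbdd : BddAbove T := by
    refine ⟨M / c, ?_⟩
    rintro z ⟨y, hy, rfl⟩
    have hy0 : (0:ℝ) < y := lt_of_lt_of_le one_pos hy.1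
    exact div_le_div₀ hM0.le (hM _ (mul_pos hlam hy0)) hc0 (hc y hy)
  set S : ℝ := sSup T with hS
  have hgmem : ∀ x : ℝ, 1 ≤ x → g x ∈ T := by
    intro x hx
    obtain ⟨y, hy, n, rfl⟩ := hrep x hx
    have hy0 : (0:ℝ) < y := lt_of_lt_of_le one_pos hy.1
    rw [hgper y hy0 n]
    exact ⟨y, hy, rfl⟩
  have hgleS : ∀ x : ℝ, 1 ≤ x → g x ≤ S := fun x hx => le_csSup hTbdd (hgmem x hx)
  have hg1 : 0 < g 1 := by
    have := hpos (lam * 1) (by simpa using hlam)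
    exact div_pos this (hpos 1 one_pos)
  have hS0 : 0 < S := lt_of_lt_of_le hg1 (le_csSup hTbdd ⟨1, ⟨le_refl _, hr.le⟩, rfl⟩)
  have hρ0 : (0:ℝ) < lam ^ ρ := Real.rpow_pos_of_pos hlam ρ
  have hmul : Tendsto (fun x : ℝ => lam * x) atTop atTop :=
    Tendsto.const_mul_atTop hlam tendsto_id
  have hlr : Tendsto (fun x : ℝ => l (lam * x) / l x) atTop (nhds 1) := hlsv lam hlam
  -- master eventual statement
  have hEv : ∀ᶠ x : ℝ in atTop,
      f (lam * x) / f x = lam ^ ρ * (l (lam * x) / l x) * g x ∧ 0 ≤ g x ∧ g x ≤ S := by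
    filter_upwards [eventually_ge_atTop (1:ℝ), hlpos, hmul.eventually hlpos] with x hx hlx hllx
    have hx0 : (0:ℝ) < x := lt_of_lt_of_le one_pos hx
    have hlamx0 : (0:ℝ) < lam * x := mul_pos hlam hx0
    have hgx0 : 0 ≤ g x := le_of_lt (div_pos (hpos _ hlamx0) (hpos _ hx0))
    refine ⟨?_, hgx0, hgleS x hx⟩
    rw [hf _ hlamx0, hf _ hx0, Real.mul_rpow hlam.le hx0.le]
    have h1 : x ^ ρ ≠ 0 := ne_of_gt (Real.rpow_pos_of_pos hx0 ρ)
    have h2 : l x ≠ 0 := ne_of_gt hlx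
    have h3 : p x ≠ 0 := ne_of_gt (hpos _ hx0)
    field_simp [hg]
    show p (lam * x) = p x * (p (lam * x) / p x)
    rw [mul_div_assoc', eq_div_iff h3, mul_comm]
  -- boundedness above of F
  have hFbdd : IsBoundedUnder (· ≤ ·) atTop (fun x : ℝ => f (lam * x) / f x) := by
    refine ⟨lam ^ ρ * 2 * S, eventually_map.mpr ?_⟩
    filter_upwards [hEv, hlr.eventually_lt_const (by norm_num : (1:ℝ) < 2),
      hmul.eventually hlpos, hlpos] with x ⟨heq, hg0, hgS⟩ hlt hllx hlx
    rw [heq]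
    exact mul_le_mul (mul_le_mul_of_nonneg_left hlt.le hρ0.le) hgS hg0
      (by positivity)
  -- cobounded (lower bound) of F
  have hFcob : IsCoboundedUnder (· ≤ ·) atTop (fun x : ℝ => f (lam * x) / f x) := by
    apply isCoboundedUnder_le_of_eventually_le (x := 0) atTop
    filter_upwards [hEv, hmul.eventually hlpos, hlpos] with x ⟨heq, hg0, _⟩ hllx hlx
    rw [heq]
    positivity
  -- upper bound
  have hub : limsup (fun x : ℝ => f (lam * x) / f x) atTop ≤ lam ^ ρ * S := by
    apply le_of_forall_pos_le_add
    intro ε hε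
    set δ : ℝ := ε / (lam ^ ρ * S) with hδ
    have hδ0 : 0 < δ := div_pos hε (mul_pos hρ0 hS0)
    apply limsup_le_of_le hFcob
    filter_upwards [hEv, hlr.eventually_lt_const (by linarith : (1:ℝ) < 1 + δ)]
      with x ⟨heq, hg0, hgS⟩ hlt
    rw [heq]
    have key : lam ^ ρ * (l (lam * x) / l x) * g x ≤ lam ^ ρ * (1 + δ) * S :=
      mul_le_mul (mul_le_mul_of_nonneg_left hlt.le hρ0.le) hgS hg0
        (mul_nonneg hρ0.le (by linarith))
    have : lam ^ ρ * (1 + δ) * S = lam ^ ρ * S + ε := by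
      have hne : lam ^ ρ * S ≠ 0 := ne_of_gt (mul_pos hρ0 hS0)
      field_simp [hδ]
      linear_combination (div_mul_cancel₀ ε hne : δ * (lam ^ ρ * S) = ε)
    linarith
  -- lower bound
  have hlb : lam ^ ρ * S ≤ limsup (fun x : ℝ => f (lam * x) / f x) atTop := by
    set L := limsup (fun x : ℝ => f (lam * x) / f x) atTop with hL
    have hmain : ∀ z ∈ T, lam ^ ρ * z ≤ L := by
      rintro z ⟨y, hy, rfl⟩
      have hy0 : (0:ℝ) < y := lt_of_lt_of_le one_pos hy.1
      have hgy0 : 0 < g y := div_pos (hpos _ (mul_pos hlam hy0)) (hpos _ hy0)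
      apply le_of_forall_pos_le_add
      intro ε hε
      set δ : ℝ := ε / (lam ^ ρ * g y) with hδ
      have hδ0 : 0 < δ := div_pos hε (mul_pos hρ0 hgy0)
      have hseq : Tendsto (fun n : ℕ => y * r ^ n) atTop atTop :=
        Tendsto.const_mul_atTop hy0 (tendsto_pow_atTop_atTop_of_one_lt hr)
      have hEv2 : ∀ᶠ x : ℝ in atTop,
          f (lam * x) / f x = lam ^ ρ * (l (lam * x) / l x) * g x ∧
            1 - δ < l (lam * x) / l x := by
        filter_upwards [hEv, hlr.eventually_const_lt (by linarith : 1 - δ < 1)]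
          with x ⟨heq, _, _⟩ hlt
        exact ⟨heq, hlt⟩
      have hfreq : ∃ᶠ x : ℝ in atTop,
          lam ^ ρ * (1 - δ) * g y ≤ f (lam * x) / f x := by
        apply hseq.frequently
        apply Frequently.mono (Eventually.frequently (hseq.eventually hEv2))
        intro n ⟨heq, hlt⟩
        rw [heq, hgper y hy0 n]
        exact mul_le_mul_of_nonneg_right
          (mul_le_mul_of_nonneg_left hlt.le hρ0.le) hgy0.le
      have := le_limsup_of_frequently_le hfreq hFbdd
      have heq2 : lam ^ ρ * (1 - δ) * g y = lam ^ ρ * g y - ε := by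
        have hne : lam ^ ρ * g y ≠ 0 := ne_of_gt (mul_pos hρ0 hgy0)
        field_simp [hδ]
        linear_combination -(div_mul_cancel₀ ε hne : δ * (lam ^ ρ * g y) = ε)
      linarith
    have hSle : S ≤ L / lam ^ ρ := by
      apply csSup_le hTne
      intro z hz
      exact (le_div_iff₀' hρ0).mpr (hmain z hz)
    calc lam ^ ρ * S ≤ lam ^ ρ * (L / lam ^ ρ) := by
          exact mul_le_mul_of_nonneg_left hSle hρ0.le
      _ = L := by field_simp
  linarith [hub, hlb]
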